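/- Let (λ_k) be a sequence in [0,1] with T = Σ λ_k < ∞ and N = Σ λ_k² < ∞. For 0 < δ < 1, the number M(δ) of indices with λ_k ≥ δ satisfies M(δ) ≥ T − (T − N)/(1 − δ). -/

import Mathlib

open Real

theorem counting_lower_bound (lam : ℕ → ℝ) (h0 : ∀ k, 0 ≤ lam k) (h1 : ∀ k, lam k ≤ 1)
    (hsum : Summable lam) (hsum2 : Summable fun k => (lam k) ^ 2)
    (δ : ℝ) (hδ0 : 0 < δ) (hδ1 : δ < 1) :
    (∑' k, lam k) - ((∑' k, lam k) - ∑' k, (lam k) ^ 2) / (1 - δ) ≤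
      (Nat.card {k : ℕ | δ ≤ lam k} : ℝ) := by
  have h1δ : (0:ℝ) < 1 - δ := by linarith
  -- finiteness of the set
  have hfin : {k : ℕ | δ ≤ lam k}.Finite := by
    have := hsum.tendsto_cofinite_zero
    have h := this.eventually (gt_mem_nhds hδ0)
    rw [Filter.eventually_cofinite] at h
    exact h.subset (fun k hk => by simp only [Set.mem_setOf_eq] at hk ⊢; linarith)
  set s := hfin.toFinset with hs
  have hcard : (Nat.card {k : ℕ | δ ≤ lam k} : ℝ) = (s.card : ℝ) := by
    rw [Nat.card_eq_card_finite_toFinset hfin]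
  rw [hcard]
  -- split the sum
  have hsplit := Summable.sum_add_tsum_subtype_compl hsum s
  set B := ∑' k : {x : ℕ // x ∉ s}, lam (k : ℕ) with hB
  have hA : ∑ k ∈ s, lam k ≤ (s.card : ℝ) := by
    calc ∑ k ∈ s, lam k ≤ ∑ _k ∈ s, (1:ℝ) := Finset.sum_le_sum fun k _ => h1 k
    _ = (s.card : ℝ) := by simp
  -- the key bound on B
  have hg : Summable (fun k => lam k - (lam k) ^ 2) := hsum.sub hsum2
  have hgnn : ∀ k, 0 ≤ lam k - (lam k) ^ 2 := by
    intro k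
    have := h0 k; have := h1 k
    nlinarith [sq_nonneg (lam k)]
  have hBsum : Summable (fun k : {x : ℕ // x ∉ s} => lam (k : ℕ)) :=
    hsum.subtype _
  have hkey : (1 - δ) * B ≤ (∑' k, lam k) - ∑' k, (lam k) ^ 2 := by
    have hstep : (1 - δ) * B ≤ ∑' k : {x : ℕ // x ∉ s}, (lam (k : ℕ) - (lam (k : ℕ)) ^ 2) := by
      rw [hB, ← tsum_mul_left]
      refine Summable.tsum_le_tsum ?_ (hBsum.mul_left _) (hg.subtype _)
      rintro ⟨k, hk⟩
      simp only [hs, Set.Finite.mem_toFinset, Set.mem_setOf_eq, not_le] at hk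
      have h0k := h0 k
      nlinarith
    have hstep2 : ∑' k : {x : ℕ // x ∉ s}, (lam (k : ℕ) - (lam (k : ℕ)) ^ 2)
        ≤ ∑' k, (lam k - (lam k) ^ 2) :=
      Summable.tsum_subtype_le (f := fun k => lam k - (lam k) ^ 2) {x : ℕ | x ∉ s} hgnn hg
    have heq : ∑' k, (lam k - (lam k) ^ 2) = (∑' k, lam k) - ∑' k, (lam k) ^ 2 :=
      Summable.tsum_sub hsum hsum2
    linarith
  have hBle : B ≤ ((∑' k, lam k) - ∑' k, (lam k) ^ 2) / (1 - δ) := by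
    rw [le_div_iff₀ h1δ]; linarith [hkey]
  have : ∑' k, lam k = ∑ k ∈ s, lam k + B := hsplit.symm
  linarith
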